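/- Conversely, if the sequence S(F,y) admits an annihilating polynomial m(X) that is monic with nonzero constant term, and N is the order of m, then S(F,y) is periodic with period N: F^[k+N] y = F^[k] y for all k ≥ 0. If moreover m is the minimal polynomial of S(F,y), then N is the least period of S(F,y). -/

import Mathlib

/-- A nonzero polynomial `p` over `ZMod 2` is an annihilating (characteristic) polynomial
of the sequence `S(F,y) = (F^[k] y)ₖ` if for every `k ≥ 0`,
`∑_{i=0}^{deg p} (coeff of Xⁱ in p) • F^[k+i] y = 0`. -/
def IsAnnihilating (n : ℕ) (F : (Fin n → ZMod 2) → (Fin n → ZMod 2))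
    (y : Fin n → ZMod 2) (p : Polynomial (ZMod 2)) : Prop :=
  p ≠ 0 ∧ ∀ k : ℕ, ∑ i ∈ Finset.range (p.natDegree + 1), p.coeff i • F^[k + i] y = 0

open Polynomial

noncomputable def shiftL (n : ℕ) : (ℕ → (Fin n → ZMod 2)) →ₗ[ZMod 2] (ℕ → (Fin n → ZMod 2)) where
  toFun s := fun k => s (k + 1)
  map_add' := by intros; rfl
  map_smul' := by intros; rfl

lemma shiftL_pow {n : ℕ} (i : ℕ) (s : ℕ → (Fin n → ZMod 2)) (k : ℕ) :
    ((shiftL n ^ i) s) k = s (k + i) := by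
  induction i generalizing s k with
  | zero => rfl
  | succ i ih =>
      rw [pow_succ', Module.End.mul_apply]
      show ((shiftL n ^ i) s) (k + 1) = _
      rw [ih, add_assoc, add_comm 1 i]

lemma aeval_shiftL_apply {n : ℕ} (p : Polynomial (ZMod 2)) (s : ℕ → (Fin n → ZMod 2)) (k : ℕ) :
    ((Polynomial.aeval (shiftL n) p) s) k
      = ∑ i ∈ Finset.range (p.natDegree + 1), p.coeff i • s (k + i) := by
  rw [Polynomial.aeval_endomorphism, Polynomial.sum_def, Finset.sum_apply]
  rw [Finset.sum_subset p.supp_subset_range_natDegree_succ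
    (by intro i _ hi; rw [Polynomial.notMem_support_iff] at hi; simp [hi])]
  simp [shiftL_pow]

lemma aeval_sub_pow_apply {n : ℕ} (N : ℕ) (s : ℕ → (Fin n → ZMod 2)) (k : ℕ) :
    ((Polynomial.aeval (shiftL n) (X ^ N - 1 : Polynomial (ZMod 2))) s) k
      = s (k + N) - s k := by
  rw [map_sub, map_pow, Polynomial.aeval_X, Polynomial.aeval_one]
  simp [shiftL_pow]


/-- If `S(F,y)` admits an annihilating polynomial `μ` that is monic with
nonzero constant term, and `N` is the order of `μ`, then `S(F,y)` is periodic with period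
`N`. If moreover `μ` is the minimal polynomial of `S(F,y)`, then `N` is its least period. -/
theorem periodic_of_annihilating_with_nonzero_constant (n : ℕ) (hn : 0 < n)
    (F : (Fin n → ZMod 2) → (Fin n → ZMod 2)) (y : Fin n → ZMod 2)
    (μ : Polynomial (ZMod 2)) (hmonic : μ.Monic) (hann : IsAnnihilating n F y μ)
    (hconst : μ.coeff 0 ≠ 0)
    (N : ℕ) (hN : 1 ≤ N) (hdvd : μ ∣ (Polynomial.X ^ N - 1 : Polynomial (ZMod 2)))
    (hord : ∀ T : ℕ, 1 ≤ T → μ ∣ (Polynomial.X ^ T - 1 : Polynomial (ZMod 2)) → N ≤ T) :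
    (∀ k : ℕ, F^[k + N] y = F^[k] y) ∧
    ((∀ p : Polynomial (ZMod 2), IsAnnihilating n F y p → μ.natDegree ≤ p.natDegree) →
      ∀ N' : ℕ, 1 ≤ N' → (∀ k : ℕ, F^[k + N'] y = F^[k] y) → N ≤ N') := by
  set s : ℕ → (Fin n → ZMod 2) := fun k => F^[k] y with hs
  have hA : (Polynomial.aeval (shiftL n) μ) s = 0 := by
    funext k
    rw [aeval_shiftL_apply]
    exact hann.2 k
  constructor
  · -- periodicity with period N
    obtain ⟨c, hc⟩ := hdvd
    intro k
    have h0 : ((Polynomial.aeval (shiftL n) (X ^ N - 1 : Polynomial (ZMod 2))) s) k = 0 := by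
      rw [hc, mul_comm μ c, map_mul, Module.End.mul_apply, hA, map_zero]
      rfl
    rw [aeval_sub_pow_apply] at h0
    exact sub_eq_zero.mp h0
  · intro hmin N' hN' hper
    have hq0 : (Polynomial.aeval (shiftL n) (X ^ N' - 1 : Polynomial (ZMod 2))) s = 0 := by
      funext k
      rw [aeval_sub_pow_apply]
      show F^[k + N'] y - F^[k] y = (0 : ℕ → Fin n → ZMod 2) k
      rw [hper k, sub_self]
      rfl
    set r := (X ^ N' - 1 : Polynomial (ZMod 2)) %ₘ μ with hr
    have hrs : (Polynomial.aeval (shiftL n) r) s = 0 := by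
      have hdecomp : r = (X ^ N' - 1 : Polynomial (ZMod 2))
          - ((X ^ N' - 1 : Polynomial (ZMod 2)) /ₘ μ) * μ := by
        have := Polynomial.modByMonic_add_div (X ^ N' - 1 : Polynomial (ZMod 2)) μ
        linear_combination this
      rw [hdecomp, map_sub, map_mul]
      rw [LinearMap.sub_apply, Module.End.mul_apply, hA, map_zero, hq0]
      simp
    by_cases hr0 : r = 0
    · exact hord N' hN' ((Polynomial.modByMonic_eq_zero_iff_dvd hmonic).mp hr0)
    · exfalso
      have hrann : IsAnnihilating n F y r := by
        refine ⟨hr0, fun k => ?_⟩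
        have := congrFun hrs k
        rw [aeval_shiftL_apply] at this
        exact this
      have hle := hmin r hrann
      have hlt : r.natDegree < μ.natDegree := by
        apply Polynomial.natDegree_lt_natDegree hr0
        exact Polynomial.degree_modByMonic_lt _ hmonic
      omega
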